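/- Let W denote an irreducible T-module with endpoint r, set d = D − 2r, and let u ∈ E_r W, u* ∈ E*_r W, u^ε ∈ E^ε_r W be nonzero. Then ⟨u^ε, u*⟩ ≠ 0 and ||u||² = (1+i)^d·⟨u, u*⟩·⟨u^ε, u⟩·⟨u^ε, u*⟩^{−1}. -/

import Mathlib

noncomputable section

open Matrix Finset

/-- Vertex set of the hypercube `Q_D`: binary strings of length `D`. -/
abbrev Vtx (D : ℕ) := Fin D → Bool

/-- Hamming weight of a vertex, i.e. its distance to the fixed vertex `x = (0,...,0)`. -/
def wt {D : ℕ} (y : Vtx D) : ℕ := (Finset.univ.filter fun k => y k = true).card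

/-- The adjacency matrix of the hypercube `Q_D`: `A_{yz} = 1` iff `y,z` differ in exactly
one coordinate. -/
def adjMat (D : ℕ) : Matrix (Vtx D) (Vtx D) ℂ :=
  fun y z => if (Finset.univ.filter fun k => y k ≠ z k).card = 1 then 1 else 0

/-- The dual adjacency matrix of `Q_D` with respect to `x = (0,...,0)`: the diagonal
matrix with `(y,y)`-entry `D - 2·wt(y)`. -/
def dualAdjMat (D : ℕ) : Matrix (Vtx D) (Vtx D) ℂ :=
  Matrix.diagonal fun y => (D : ℂ) - 2 * (wt y : ℂ)

/-- The imaginary adjacency matrix `Aᵉ = -i(AA* - A*A)/2`. -/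
def imagAdjMat (D : ℕ) : Matrix (Vtx D) (Vtx D) ℂ :=
  (-Complex.I / 2) • (adjMat D * dualAdjMat D - dualAdjMat D * adjMat D)

/-- The 2×2 matrix `P₁` with entries `(P₁)₀₀ = 1`, `(P₁)₀₁ = 1`, `(P₁)₁₀ = -i`,
`(P₁)₁₁ = i`. -/
def P1 : Bool → Bool → ℂ
  | false, false => 1
  | false, true  => 1
  | true,  false => -Complex.I
  | true,  true  => Complex.I

/-- The D-fold Kronecker power `P = P₁^{⊗D}`, i.e. `P_{yz} = ∏_k (P₁)_{y_k z_k}`. -/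
def Pmat (D : ℕ) : Matrix (Vtx D) (Vtx D) ℂ :=
  fun y z => ∏ k : Fin D, P1 (y k) (z k)

/-- The eigenvalues `θ_j = D - 2j`. -/
def theta (D j : ℕ) : ℂ := (D : ℂ) - 2 * (j : ℂ)

/-- The `i`-th primitive idempotent `E_i = ∏_{0 ≤ j ≤ D, j ≠ i} (A - θ_j I)/(θ_i - θ_j)`. -/
def Emat (D i : ℕ) : Matrix (Vtx D) (Vtx D) ℂ :=
  Polynomial.aeval (adjMat D)
    (∏ j ∈ (Finset.range (D + 1)).erase i,
      Polynomial.C ((theta D i - theta D j)⁻¹) * (Polynomial.X - Polynomial.C (theta D j)))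

/-- The `i`-th dual idempotent `E*_i`: diagonal with `(y,y)`-entry `1` if `wt(y) = i`. -/
def EstarMat (D i : ℕ) : Matrix (Vtx D) (Vtx D) ℂ :=
  Matrix.diagonal fun y => if wt y = i then 1 else 0

/-- The `i`-th imaginary idempotent `Eᵉ_i = P⁻¹ E_i P`. -/
def EepsMat (D i : ℕ) : Matrix (Vtx D) (Vtx D) ℂ :=
  (Pmat D)⁻¹ * Emat D i * Pmat D

/-- `W` is a `T`-module: a subspace of `ℂ^X` invariant under `A` and `A*`. -/
def IsTMod (D : ℕ) (W : Submodule ℂ (Vtx D → ℂ)) : Prop :=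
  (∀ w ∈ W, (adjMat D).mulVec w ∈ W) ∧ (∀ w ∈ W, (dualAdjMat D).mulVec w ∈ W)

/-- `W` is an irreducible `T`-module. -/
def IsIrredTMod (D : ℕ) (W : Submodule ℂ (Vtx D → ℂ)) : Prop :=
  IsTMod D W ∧ W ≠ ⊥ ∧
    ∀ U : Submodule ℂ (Vtx D → ℂ), IsTMod D U → U ≤ W → U = ⊥ ∨ U = W

/-- The Hermitian inner product `⟨u,v⟩ = uᵗ · conj v` (linear in the first argument). -/
def inp {D : ℕ} (u v : Vtx D → ℂ) : ℂ := ∑ y, u y * (starRingEnd ℂ) (v y)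


namespace HC

variable {D : ℕ}

/-- Flip coordinate `k`. -/
def flip (y : Vtx D) (k : Fin D) : Vtx D := Function.update y k (!(y k))

@[simp] lemma flip_apply_self (y : Vtx D) (k : Fin D) : flip y k k = !(y k) := by
  simp [flip]

lemma flip_apply_ne (y : Vtx D) {k m : Fin D} (h : m ≠ k) : flip y k m = y m := by
  simp [flip, Function.update_of_ne h]

lemma flip_injective (y : Vtx D) : Function.Injective (flip y) := by
  intro k k' h
  by_contra hne
  have h1 := congrFun h k
  rw [flip_apply_self] at h1
  rw [flip_apply_ne y (fun hkk => hne hkk)] at h1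
  cases hyk : y k <;> rw [hyk] at h1 <;> simp at h1

/-- The set of coordinates where `y` and `z` differ. -/
def dset (y z : Vtx D) : Finset (Fin D) := Finset.univ.filter fun k => y k ≠ z k

lemma dset_comm (y z : Vtx D) : dset y z = dset z y := by
  simp [dset, ne_comm]

lemma dset_card_one (y z : Vtx D) : (dset y z).card = 1 ↔ ∃ k, z = flip y k := by
  constructor
  · intro h
    obtain ⟨a, ha⟩ := Finset.card_eq_one.mp h
    refine ⟨a, funext fun m => ?_⟩
    by_cases hm : m = a
    · subst hm
      have : m ∈ dset y z := ha ▸ Finset.mem_singleton_self m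
      simp only [dset, Finset.mem_filter] at this
      have := this.2
      rw [flip_apply_self]
      revert this; cases y m <;> cases z m <;> simp
    · have : m ∉ dset y z := by rw [ha]; simp [hm]
      simp only [dset, Finset.mem_filter, Finset.mem_univ, true_and, not_not] at this
      rw [flip_apply_ne y hm, this]
  · rintro ⟨k, rfl⟩
    rw [Finset.card_eq_one]
    refine ⟨k, ?_⟩
    ext m
    simp only [dset, Finset.mem_filter, Finset.mem_univ, true_and, Finset.mem_singleton]
    by_cases hm : m = k
    · subst hm; simp
    · rw [flip_apply_ne y hm]; simp [hm]

lemma wt_le (y : Vtx D) : wt y ≤ D := by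
  have := Finset.card_filter_le (Finset.univ : Finset (Fin D)) (fun k => y k = true)
  simpa [wt] using this

lemma wt_flip_false {y : Vtx D} {k : Fin D} (h : y k = false) :
    wt (flip y k) = wt y + 1 := by
  have hset : (Finset.univ.filter fun m => flip y k m = true)
      = insert k (Finset.univ.filter fun m => y m = true) := by
    ext m
    by_cases hm : m = k
    · subst hm; simp [h]
    · simp [flip_apply_ne y hm, hm]
  have hk : k ∉ (Finset.univ.filter fun m => y m = true) := by simp [h]
  rw [wt, hset, Finset.card_insert_of_notMem hk, wt]

lemma wt_flip_true {y : Vtx D} {k : Fin D} (h : y k = true) :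
    wt (flip y k) + 1 = wt y := by
  have hset : (Finset.univ.filter fun m => flip y k m = true)
      = (Finset.univ.filter fun m => y m = true).erase k := by
    ext m
    by_cases hm : m = k
    · subst hm; simp [h]
    · simp [flip_apply_ne y hm, hm]
  have hk : k ∈ (Finset.univ.filter fun m => y m = true) := by simp [h]
  rw [wt, hset, Finset.card_erase_of_mem hk, wt,
    Nat.sub_add_cancel (Nat.one_le_iff_ne_zero.mpr (Finset.card_ne_zero_of_mem hk))]

lemma card_filter_false (y : Vtx D) :
    (Finset.univ.filter fun k => y k = false).card = D - wt y := by
  have h1 : (Finset.univ.filter fun k => y k = false)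
      = (Finset.univ.filter fun k => y k = true)ᶜ := by
    ext m
    simp only [Finset.mem_filter, Finset.mem_univ, true_and, Finset.mem_compl]
    cases y m <;> simp
  rw [h1, Finset.card_compl, wt]
  simp

end HC
namespace HC

variable {D : ℕ}

lemma sum_ite_flip (y : Vtx D) (c : Vtx D → Prop) [DecidablePred c] (f : Vtx D → ℂ) :
    ∑ z, (if (dset y z).card = 1 ∧ c z then (1:ℂ) else 0) * f z
      = ∑ k ∈ Finset.univ.filter (fun k => c (flip y k)), f (flip y k) := by
  have h1 : ∀ z, (if (dset y z).card = 1 ∧ c z then (1:ℂ) else 0) * f z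
      = if (dset y z).card = 1 ∧ c z then f z else 0 := by
    intro z; split <;> simp
  rw [Finset.sum_congr rfl (fun z _ => h1 z), ← Finset.sum_filter]
  have h2 : Finset.univ.filter (fun z => (dset y z).card = 1 ∧ c z)
      = (Finset.univ.filter (fun k => c (flip y k))).image (flip y) := by
    ext z
    simp only [Finset.mem_filter, Finset.mem_univ, true_and, Finset.mem_image]
    constructor
    · rintro ⟨h1', h2'⟩
      obtain ⟨k, rfl⟩ := (dset_card_one y z).mp h1'
      exact ⟨k, h2', rfl⟩
    · rintro ⟨k, hk, rfl⟩
      exact ⟨(dset_card_one y _).mpr ⟨k, rfl⟩, hk⟩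
  rw [h2, Finset.sum_image (fun a _ b _ h => flip_injective y h)]

lemma adjMat_apply (y z : Vtx D) :
    adjMat D y z = if (dset y z).card = 1 ∧ True then (1:ℂ) else 0 := by
  simp [adjMat, dset]

lemma adjMat_symm (y z : Vtx D) : adjMat D y z = adjMat D z y := by
  rw [adjMat_apply, adjMat_apply, dset_comm]

lemma adj_mul_apply (B : Matrix (Vtx D) (Vtx D) ℂ) (y z : Vtx D) :
    (adjMat D * B) y z = ∑ k, B (flip y k) z := by
  rw [Matrix.mul_apply]
  have : ∀ w, adjMat D y w * B w z
      = (if (dset y w).card = 1 ∧ True then (1:ℂ) else 0) * B w z := by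
    intro w; rw [adjMat_apply]
  rw [Finset.sum_congr rfl (fun w _ => this w), sum_ite_flip y (fun _ => True)]
  simp

lemma mul_adj_apply (B : Matrix (Vtx D) (Vtx D) ℂ) (y z : Vtx D) :
    (B * adjMat D) y z = ∑ k, B y (flip z k) := by
  rw [Matrix.mul_apply]
  have : ∀ w, B y w * adjMat D w z
      = (if (dset z w).card = 1 ∧ True then (1:ℂ) else 0) * B y w := by
    intro w; rw [adjMat_symm, adjMat_apply, mul_comm]
  rw [Finset.sum_congr rfl (fun w _ => this w), sum_ite_flip z (fun _ => True)]
  simp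

/-- The lowering matrix. -/
def loMat (D : ℕ) : Matrix (Vtx D) (Vtx D) ℂ :=
  fun y z => if (dset y z).card = 1 ∧ wt z = wt y + 1 then 1 else 0

/-- The raising matrix. -/
def raMat (D : ℕ) : Matrix (Vtx D) (Vtx D) ℂ :=
  fun y z => if (dset y z).card = 1 ∧ wt y = wt z + 1 then 1 else 0

lemma wt_flip_eq_iff_false {y : Vtx D} (k : Fin D) :
    wt (flip y k) = wt y + 1 ↔ y k = false := by
  cases hyk : y k
  · simp [wt_flip_false hyk]
  · have := wt_flip_true hyk; constructor
    · intro h; omega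
    · intro h; simp at h
lemma wt_flip_eq_iff_true {y : Vtx D} (k : Fin D) :
    wt y = wt (flip y k) + 1 ↔ y k = true := by
  cases hyk : y k
  · have := wt_flip_false hyk; constructor
    · intro h; omega
    · intro h; simp at h
  · simp [(wt_flip_true hyk).symm]

lemma lo_mul_apply (B : Matrix (Vtx D) (Vtx D) ℂ) (y z : Vtx D) :
    (loMat D * B) y z = ∑ k ∈ Finset.univ.filter (fun k => y k = false), B (flip y k) z := by
  rw [Matrix.mul_apply]
  simp only [loMat]
  rw [sum_ite_flip y (fun w => wt w = wt y + 1)]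
  apply Finset.sum_congr
  · apply Finset.filter_congr; intro k _; simp [wt_flip_eq_iff_false k]
  · intros; rfl

lemma ra_mul_apply (B : Matrix (Vtx D) (Vtx D) ℂ) (y z : Vtx D) :
    (raMat D * B) y z = ∑ k ∈ Finset.univ.filter (fun k => y k = true), B (flip y k) z := by
  rw [Matrix.mul_apply]
  simp only [raMat]
  rw [sum_ite_flip y (fun w => wt y = wt w + 1)]
  apply Finset.sum_congr
  · apply Finset.filter_congr; intro k _; simp [wt_flip_eq_iff_true k]
  · intros; rfl

lemma mul_lo_apply (B : Matrix (Vtx D) (Vtx D) ℂ) (y z : Vtx D) :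
    (B * loMat D) y z = ∑ k ∈ Finset.univ.filter (fun k => z k = true), B y (flip z k) := by
  rw [Matrix.mul_apply]
  have h1 : ∀ w, B y w * loMat D w z
      = (if (dset z w).card = 1 ∧ wt z = wt w + 1 then (1:ℂ) else 0) * B y w := by
    intro w
    rw [mul_comm, loMat, dset_comm]
  rw [Finset.sum_congr rfl (fun w _ => h1 w), sum_ite_flip z (fun w => wt z = wt w + 1)]
  apply Finset.sum_congr
  · apply Finset.filter_congr; intro k _; simp [wt_flip_eq_iff_true k]
  · intros; rfl

lemma mul_ra_apply (B : Matrix (Vtx D) (Vtx D) ℂ) (y z : Vtx D) :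
    (B * raMat D) y z = ∑ k ∈ Finset.univ.filter (fun k => z k = false), B y (flip z k) := by
  rw [Matrix.mul_apply]
  have h1 : ∀ w, B y w * raMat D w z
      = (if (dset z w).card = 1 ∧ wt w = wt z + 1 then (1:ℂ) else 0) * B y w := by
    intro w
    rw [mul_comm, raMat, dset_comm]
  rw [Finset.sum_congr rfl (fun w _ => h1 w), sum_ite_flip z (fun w => wt w = wt z + 1)]
  apply Finset.sum_congr
  · apply Finset.filter_congr; intro k _; simp [wt_flip_eq_iff_false k]
  · intros; rfl

lemma lo_add_ra : loMat D + raMat D = adjMat D := by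
  ext y z
  rw [Matrix.add_apply, adjMat_apply, loMat, raMat]
  by_cases h : (dset y z).card = 1
  · obtain ⟨k, rfl⟩ := (dset_card_one y z).mp h
    cases hyk : y k
    · have h1 := (wt_flip_eq_iff_false k).mpr hyk
      have h2 : ¬ (wt y = wt (flip y k) + 1) := by omega
      simp [h, h1, h2] <;> omega
    · have h1 := (wt_flip_eq_iff_true k).mpr hyk
      have h2 : ¬ (wt (flip y k) = wt y + 1) := by omega
      simp [h, h1, h2] <;> omega
  · simp [h]

lemma lo_conjTranspose : (loMat D)ᴴ = raMat D := by
  ext y z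
  rw [Matrix.conjTranspose_apply, loMat, raMat, dset_comm]
  split <;> simp

lemma ra_eq_comb : raMat D = (2⁻¹ : ℂ) • adjMat D
    + (4⁻¹ : ℂ) • (adjMat D * dualAdjMat D - dualAdjMat D * adjMat D) := by
  ext y z
  simp only [Matrix.add_apply, Matrix.smul_apply, Matrix.sub_apply, dualAdjMat,
    Matrix.mul_diagonal, Matrix.diagonal_mul, smul_eq_mul]
  rw [raMat]
  by_cases h : (dset y z).card = 1
  · obtain ⟨k, rfl⟩ := (dset_card_one y z).mp h
    rw [adjMat_apply]
    cases hyk : y k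
    · have h1 : wt (flip y k) = wt y + 1 := wt_flip_false hyk
      rw [if_neg (by rintro ⟨-, h2⟩; omega :
          ¬((dset y (flip y k)).card = 1 ∧ wt y = wt (flip y k) + 1)),
        if_pos ⟨h, trivial⟩, h1]
      push_cast
      ring
    · have h1 : wt y = wt (flip y k) + 1 := ((wt_flip_eq_iff_true k).mpr hyk)
      rw [if_pos ⟨h, h1⟩, if_pos ⟨h, trivial⟩, h1]
      push_cast
      ring
  · rw [adjMat_apply]
    simp [h]

lemma lo_eq_comb : loMat D = (2⁻¹ : ℂ) • adjMat D
    - (4⁻¹ : ℂ) • (adjMat D * dualAdjMat D - dualAdjMat D * adjMat D) := by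
  have h1 := lo_add_ra (D := D)
  have h2 := ra_eq_comb (D := D)
  have h3 : loMat D = adjMat D - raMat D := by
    rw [← h1]; abel
  rw [h3, h2]
  module

lemma imagAdj_eq : imagAdjMat D = (-Complex.I) • (raMat D - loMat D) := by
  rw [imagAdjMat, ra_eq_comb, lo_eq_comb]
  module

end HC
namespace HC

variable {D : ℕ}

lemma mem_dset {y z : Vtx D} {m : Fin D} : m ∈ dset y z ↔ y m ≠ z m := by
  simp [dset]

lemma flip_flip (y : Vtx D) (k : Fin D) : flip (flip y k) k = y := by
  funext m
  by_cases hm : m = k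
  · subst hm; simp
  · rw [flip_apply_ne _ hm, flip_apply_ne _ hm]

lemma dset_flip_left (y z : Vtx D) (k : Fin D) :
    dset (flip y k) z = if k ∈ dset y z then (dset y z).erase k else insert k (dset y z) := by
  have hmem : ∀ m, m ∈ dset (flip y k) z ↔ (m = k ∧ m ∉ dset y z) ∨ (m ≠ k ∧ m ∈ dset y z) := by
    intro m
    by_cases hm : m = k
    · subst hm
      rw [mem_dset, flip_apply_self]
      simp only [mem_dset, true_and, ne_eq, not_true_eq_false, false_and, or_false, not_not]
      cases y m <;> cases z m <;> simp
    · rw [mem_dset, flip_apply_ne y hm, mem_dset]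
      simp [hm]
  ext m
  rw [hmem m]
  split
  case isTrue h =>
    simp only [Finset.mem_erase]
    constructor
    · rintro (⟨rfl, hk⟩ | ⟨h1, h2⟩)
      · exact absurd h hk
      · exact ⟨h1, h2⟩
    · rintro ⟨h1, h2⟩; exact Or.inr ⟨h1, h2⟩
  case isFalse h =>
    simp only [Finset.mem_insert]
    constructor
    · rintro (⟨rfl, -⟩ | ⟨-, h2⟩)
      · exact Or.inl rfl
      · exact Or.inr h2
    · rintro (rfl | h2)
      · exact Or.inl ⟨rfl, h⟩
      · by_cases hmk : m = k
        · subst hmk; exact absurd h2 h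
        · exact Or.inr ⟨hmk, h2⟩

lemma dset_flip_mem {y z : Vtx D} {a : Fin D} (ha : a ∈ dset y z) :
    dset (flip y a) z = (dset y a |> fun _ => (dset y z).erase a) := by
  rw [dset_flip_left, if_pos ha]

lemma card_one_of_flip {y z : Vtx D} {k : Fin D} (hyz : y ≠ z)
    (h : (dset (flip y k) z).card = 1) : k ∈ dset y z ∧ (dset y z).card = 2 := by
  rw [dset_flip_left] at h
  by_cases hk : k ∈ dset y z
  · rw [if_pos hk, Finset.card_erase_of_mem hk] at h
    have hge : 0 < (dset y z).card := Finset.card_pos.mpr ⟨k, hk⟩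
    exact ⟨hk, by omega⟩
  · rw [if_neg hk, Finset.card_insert_of_notMem hk] at h
    have h0 : dset y z = ∅ := Finset.card_eq_zero.mp (by omega)
    exfalso; apply hyz; funext m
    have hm : m ∉ dset y z := h0 ▸ Finset.notMem_empty m
    rw [mem_dset, not_not] at hm
    exact hm

lemma flip_flip_of_dset {y z : Vtx D} {a b : Fin D} (hab : a ≠ b)
    (hS : dset y z = {a, b}) : z = flip (flip y a) b := by
  have haS : a ∈ dset y z := by rw [hS]; simp
  have hbS : b ∈ dset y z := by rw [hS]; simp
  rw [mem_dset] at haS hbS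
  funext m
  by_cases hma : m = a
  · subst hma
    rw [flip_apply_ne _ hab, flip_apply_self]
    revert haS; cases y m <;> cases z m <;> simp
  · by_cases hmb : m = b
    · subst hmb
      rw [flip_apply_self, flip_apply_ne y (fun h => hab h.symm)]
      revert hbS; cases y m <;> cases z m <;> simp
    · rw [flip_apply_ne _ hmb, flip_apply_ne _ hma]
      have : m ∉ dset y z := by rw [hS]; simp [hma, hmb]
      rw [mem_dset, not_not] at this
      exact this.symm

lemma lo_ra_comm : loMat D * raMat D - raMat D * loMat D = dualAdjMat D := by
  ext y z
  rw [Matrix.sub_apply, lo_mul_apply, ra_mul_apply]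
  by_cases hyz : y = z
  · subst hyz
    have h1 : ∀ k ∈ Finset.univ.filter (fun k => y k = false),
        raMat D (flip y k) y = 1 := by
      intro k hk
      simp only [Finset.mem_filter, Finset.mem_univ, true_and] at hk
      have hc : (dset (flip y k) y).card = 1 := by
        rw [dset_comm]; exact (dset_card_one y (flip y k)).mpr ⟨k, rfl⟩
      rw [raMat, if_pos ⟨hc, wt_flip_false hk⟩]
    have h2 : ∀ k ∈ Finset.univ.filter (fun k => y k = true),
        loMat D (flip y k) y = 1 := by
      intro k hk
      simp only [Finset.mem_filter, Finset.mem_univ, true_and] at hk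
      have hc : (dset (flip y k) y).card = 1 := by
        rw [dset_comm]; exact (dset_card_one y (flip y k)).mpr ⟨k, rfl⟩
      rw [loMat, if_pos ⟨hc, (wt_flip_true hk).symm⟩]
    rw [Finset.sum_congr rfl h1, Finset.sum_congr rfl h2, Finset.sum_const,
      Finset.sum_const, card_filter_false]
    rw [dualAdjMat, Matrix.diagonal_apply_eq]
    have hle := wt_le y
    have hwt : (Finset.univ.filter fun k => y k = true).card = wt y := rfl
    rw [hwt, nsmul_eq_mul, nsmul_eq_mul, mul_one, mul_one, Nat.cast_sub hle]
    ring
  · rw [dualAdjMat, Matrix.diagonal_apply_ne _ hyz]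
    by_cases h2 : (dset y z).card = 2
    · obtain ⟨a, b, hab, hS⟩ := Finset.card_eq_two.mp h2
      have haS : a ∈ dset y z := by rw [hS]; simp
      have hbS : b ∈ dset y z := by rw [hS]; simp
      have hda : dset (flip y a) z = {b} := by
        rw [dset_flip_left, if_pos haS, hS, Finset.erase_insert (by simp [hab])]
      have hdb : dset (flip y b) z = {a} := by
        rw [dset_flip_left, if_pos hbS, hS, Finset.pair_comm,
          Finset.erase_insert (by simp [Ne.symm hab])]
      have hca : (dset (flip y a) z).card = 1 := by rw [hda]; simp
      have hcb : (dset (flip y b) z).card = 1 := by rw [hdb]; simp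
      have hza : z = flip (flip y a) b := flip_flip_of_dset hab hS
      have hzb : z = flip (flip y b) a := by
        apply flip_flip_of_dset (fun h => hab h.symm)
        rw [hS, Finset.pair_comm]
      have hfab : (flip y a) b = y b := flip_apply_ne y (fun h => hab h.symm)
      have hfba : (flip y b) a = y a := flip_apply_ne y hab
      have hsum1 : ∑ k ∈ Finset.univ.filter (fun k => y k = false), raMat D (flip y k) z
          = (if y a = false then raMat D (flip y a) z else 0)
            + (if y b = false then raMat D (flip y b) z else 0) := by
        rw [Finset.sum_filter, ← Finset.sum_subset (Finset.subset_univ {a, b})]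
        · rw [Finset.sum_pair hab]
        · intro k _ hk
          simp only [Finset.mem_insert, Finset.mem_singleton] at hk
          push_neg at hk
          have hz : raMat D (flip y k) z = 0 := by
            rw [raMat, if_neg]; rintro ⟨hc, -⟩
            have hk2 := (card_one_of_flip hyz hc).1
            rw [hS] at hk2
            simp [hk.1, hk.2] at hk2
          rw [hz]; simp
      have hsum2 : ∑ k ∈ Finset.univ.filter (fun k => y k = true), loMat D (flip y k) z
          = (if y a = true then loMat D (flip y a) z else 0)
            + (if y b = true then loMat D (flip y b) z else 0) := by
        rw [Finset.sum_filter, ← Finset.sum_subset (Finset.subset_univ {a, b})]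
        · rw [Finset.sum_pair hab]
        · intro k _ hk
          simp only [Finset.mem_insert, Finset.mem_singleton] at hk
          push_neg at hk
          have hz : loMat D (flip y k) z = 0 := by
            rw [loMat, if_neg]; rintro ⟨hc, -⟩
            have hk2 := (card_one_of_flip hyz hc).1
            rw [hS] at hk2
            simp [hk.1, hk.2] at hk2
          rw [hz]; simp
      rw [hsum1, hsum2]
      cases hya : y a <;> cases hyb : y b
      · -- both false : all relevant entries are 0
        have e1 : wt (flip y a) = wt y + 1 := wt_flip_false hya
        have e2 : wt (flip y b) = wt y + 1 := wt_flip_false hyb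
        have ez : wt z = wt (flip y a) + 1 := by
          rw [hza]; exact wt_flip_false (by rw [hfab, hyb])
      
        have hr_a : raMat D (flip y a) z = 0 := by
          rw [raMat, if_neg]; rintro ⟨-, h⟩; omega
        have hr_b : raMat D (flip y b) z = 0 := by
          have ez2 : wt z = wt (flip y b) + 1 := by
            rw [hzb]; exact wt_flip_false (by rw [hfba, hya])
          rw [raMat, if_neg]; rintro ⟨-, h⟩; omega
        simp [hr_a, hr_b]
      · -- y a = false, y b = true
        have e1 : wt (flip y a) = wt y + 1 := wt_flip_false hya
        have e3 : wt (flip y b) + 1 = wt y := wt_flip_true hyb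
        have ez : wt z + 1 = wt (flip y a) := by
          rw [hza]; exact wt_flip_true (by rw [hfab, hyb])
        have ez2 : wt z = wt (flip y b) + 1 := by
          rw [hzb]; exact wt_flip_false (by rw [hfba, hya])
        have hr_a : raMat D (flip y a) z = 1 := by
          rw [raMat, if_pos ⟨hca, by omega⟩]
        have hl_b : loMat D (flip y b) z = 1 := by
          rw [loMat, if_pos ⟨hcb, ez2⟩]
        simp [hya, hyb, hr_a, hl_b]
      · -- y a = true, y b = false
        have e1 : wt (flip y b) = wt y + 1 := wt_flip_false hyb
        have e3 : wt (flip y a) + 1 = wt y := wt_flip_true hya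
        have ez : wt z + 1 = wt (flip y b) := by
          rw [hzb]; exact wt_flip_true (by rw [hfba, hya])
        have ez2 : wt z = wt (flip y a) + 1 := by
          rw [hza]; exact wt_flip_false (by rw [hfab, hyb])
        have hr_b : raMat D (flip y b) z = 1 := by
          rw [raMat, if_pos ⟨hcb, by omega⟩]
        have hl_a : loMat D (flip y a) z = 1 := by
          rw [loMat, if_pos ⟨hca, ez2⟩]
        simp [hya, hyb, hr_b, hl_a]
      · -- both true
        have e1 : wt (flip y a) + 1 = wt y := wt_flip_true hya
        have e2 : wt (flip y b) + 1 = wt y := wt_flip_true hyb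
        have ez : wt z + 1 = wt (flip y a) := by
          rw [hza]; exact wt_flip_true (by rw [hfab, hyb])
        have ez2 : wt z + 1 = wt (flip y b) := by
          rw [hzb]; exact wt_flip_true (by rw [hfba, hya])
        have hl_a : loMat D (flip y a) z = 0 := by
          rw [loMat, if_neg]; rintro ⟨-, h⟩; omega
        have hl_b : loMat D (flip y b) z = 0 := by
          rw [loMat, if_neg]; rintro ⟨-, h⟩; omega
        simp [hya, hyb, hl_a, hl_b]
    · have hra : ∀ k, raMat D (flip y k) z = 0 := by
        intro k
        rw [raMat, if_neg]; rintro ⟨hc, -⟩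
        exact h2 (card_one_of_flip hyz hc).2
      have hlo : ∀ k, loMat D (flip y k) z = 0 := by
        intro k
        rw [loMat, if_neg]; rintro ⟨hc, -⟩
        exact h2 (card_one_of_flip hyz hc).2
      simp [hra, hlo]

end HC
namespace HC

variable {D : ℕ}

lemma P1_flip_right (b c : Bool) : P1 b (!c) = (if b then -1 else 1) * P1 b c := by
  cases b <;> cases c <;> simp [P1] <;> ring

lemma P1_flip_left (b c : Bool) :
    P1 (!b) c = (if b = c then -Complex.I else Complex.I) * P1 b c := by
  cases b <;> cases c <;> simp [P1] <;> ring_nf <;> simp [Complex.I_sq] <;> ring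

lemma Pmat_flip_right (y z : Vtx D) (k : Fin D) :
    Pmat D y (flip z k) = (if y k then -1 else 1) * Pmat D y z := by
  rw [Pmat, Pmat, ← Finset.mul_prod_erase _ _ (Finset.mem_univ k),
    ← Finset.mul_prod_erase _ (fun m => P1 (y m) (z m)) (Finset.mem_univ k),
    flip_apply_self, P1_flip_right,
    Finset.prod_congr rfl
      (fun m hm => by rw [flip_apply_ne z (Finset.ne_of_mem_erase hm)])]
  ring

lemma Pmat_flip_left (y z : Vtx D) (k : Fin D) :
    Pmat D (flip y k) z = (if y k = z k then -Complex.I else Complex.I) * Pmat D y z := by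
  rw [Pmat, Pmat, ← Finset.mul_prod_erase _ _ (Finset.mem_univ k),
    ← Finset.mul_prod_erase _ (fun m => P1 (y m) (z m)) (Finset.mem_univ k),
    flip_apply_self, P1_flip_left,
    Finset.prod_congr rfl
      (fun m hm => by rw [flip_apply_ne y (Finset.ne_of_mem_erase hm)])]
  ring

lemma sum_sign (y : Vtx D) : ∑ k, (if y k then (-1:ℂ) else 1) = (D:ℂ) - 2 * wt y := by
  rw [Finset.sum_ite, Finset.sum_const, Finset.sum_const]
  have h1 : (Finset.univ.filter fun k => y k = true).card = wt y := rfl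
  have h2 : (Finset.univ.filter fun k => ¬ (y k = true)).card = D - wt y := by
    rw [← card_filter_false y]
    congr 1
    apply Finset.filter_congr
    intro k _
    cases y k <;> simp
  rw [h1, h2, nsmul_eq_mul, nsmul_eq_mul, mul_one, Nat.cast_sub (wt_le y)]
  ring

lemma P_mul_adj : Pmat D * adjMat D = dualAdjMat D * Pmat D := by
  ext y z
  rw [mul_adj_apply, dualAdjMat, Matrix.diagonal_mul,
    Finset.sum_congr rfl (fun k _ => Pmat_flip_right y z k), ← Finset.sum_mul, sum_sign]

lemma P_mul_dual : Pmat D * dualAdjMat D = imagAdjMat D * Pmat D := by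
  ext y z
  rw [dualAdjMat, Matrix.mul_diagonal, imagAdj_eq]
  have hexp : ((-Complex.I) • (raMat D - loMat D) * Pmat D) y z
      = -Complex.I * ((raMat D * Pmat D) y z - (loMat D * Pmat D) y z) := by
    rw [Matrix.smul_mul, Matrix.sub_mul]
    simp
  rw [hexp, ra_mul_apply, lo_mul_apply]
  set f : Fin D → ℂ := fun k => Pmat D (flip y k) z with hf
  have hsplit := Finset.sum_filter_add_sum_filter_not Finset.univ (fun k => y k = true)
      (fun k => if y k then f k else -(f k))
  have hA : ∑ k ∈ Finset.univ.filter (fun k => y k = true),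
      (if y k then f k else -(f k)) = ∑ k ∈ Finset.univ.filter (fun k => y k = true), f k := by
    apply Finset.sum_congr rfl
    intro k hk
    simp only [Finset.mem_filter, Finset.mem_univ, true_and] at hk
    rw [if_pos hk]
  have hB : ∑ k ∈ Finset.univ.filter (fun k => ¬ (y k = true)),
      (if y k then f k else -(f k))
      = -∑ k ∈ Finset.univ.filter (fun k => y k = false), f k := by
    rw [← Finset.sum_neg_distrib]
    apply Finset.sum_congr
    · apply Finset.filter_congr; intro k _; cases y k <;> simp
    · intro k hk
      simp only [Finset.mem_filter, Finset.mem_univ, true_and] at hk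
      rw [if_neg (by simp [hk])]
  have hval : ∀ k, (if y k then f k else -(f k))
      = (if z k then -Complex.I else Complex.I) * Pmat D y z := by
    intro k
    rw [hf]
    simp only
    rw [Pmat_flip_left]
    cases hyk : y k <;> cases hzk : z k <;> simp [hyk, hzk] <;> ring
  have hsum : ∑ k : Fin D, (if y k then f k else -(f k))
      = (Complex.I * ((D:ℂ) - 2 * wt z)) * Pmat D y z := by
    rw [Finset.sum_congr rfl (fun k _ => hval k), ← Finset.sum_mul]
    have : ∑ k : Fin D, (if z k then -Complex.I else Complex.I)
        = Complex.I * ((D:ℂ) - 2 * wt z) := by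
      rw [← sum_sign z, Finset.mul_sum]
      apply Finset.sum_congr rfl
      intro k _
      cases z k <;> simp <;> ring
    rw [this]
  have : ∑ k ∈ Finset.univ.filter (fun k => y k = true), f k
      - ∑ k ∈ Finset.univ.filter (fun k => y k = false), f k
      = (Complex.I * ((D:ℂ) - 2 * wt z)) * Pmat D y z := by
    rw [← hsum, ← hsplit, hA, hB]
    ring
  rw [this]
  ring_nf
  simp [Complex.I_sq]
  ring

/-- entries of `P1 * P1`. -/
def q2 (b c : Bool) : ℂ := ∑ x : Bool, P1 b x * P1 x c

lemma P_sq_apply (y z : Vtx D) : (Pmat D * Pmat D) y z = ∏ k, q2 (y k) (z k) := by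
  rw [Matrix.mul_apply]
  have h1 : ∀ w : Vtx D, Pmat D y w * Pmat D w z = ∏ k, P1 (y k) (w k) * P1 (w k) (z k) := by
    intro w; rw [Pmat, Pmat, ← Finset.prod_mul_distrib]
  rw [Finset.sum_congr rfl (fun w _ => h1 w), ← Fintype.piFinset_univ,
    Finset.sum_prod_piFinset Finset.univ (fun k b => P1 (y k) b * P1 b (z k))]
  rfl

lemma q3_eq (b c : Bool) :
    (∑ x : Bool, q2 b x * P1 x c) = if b = c then 2 - 2*Complex.I else 0 := by
  cases b <;> cases c <;>
    simp [q2, P1, Fintype.sum_bool] <;> ring_nf <;> simp [Complex.I_sq] <;> ring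

lemma P_cube : Pmat D * Pmat D * Pmat D
    = ((2 - 2*Complex.I)^D) • (1 : Matrix (Vtx D) (Vtx D) ℂ) := by
  ext y z
  rw [Matrix.mul_apply]
  have h1 : ∀ w : Vtx D, (Pmat D * Pmat D) y w * Pmat D w z
      = ∏ k, q2 (y k) (w k) * P1 (w k) (z k) := by
    intro w; rw [P_sq_apply, Pmat, ← Finset.prod_mul_distrib]
  rw [Finset.sum_congr rfl (fun w _ => h1 w), ← Fintype.piFinset_univ,
    Finset.sum_prod_piFinset Finset.univ (fun k b => q2 (y k) b * P1 b (z k)),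
    Finset.prod_congr rfl (fun k _ => q3_eq (y k) (z k))]
  by_cases hyz : y = z
  · subst hyz
    rw [Finset.prod_congr rfl (fun k _ => if_pos rfl), Finset.prod_const]
    simp [Matrix.one_apply_eq]
  · obtain ⟨k, hk⟩ := Function.ne_iff.mp hyz
    rw [Finset.prod_eq_zero (Finset.mem_univ k)
      (if_neg hk : (if y k = z k then 2 - 2*Complex.I else 0) = 0)]
    simp [Matrix.smul_apply, Matrix.one_apply_ne hyz]

lemma c_pow_ne : ((2 - 2*Complex.I)^D) ≠ 0 := by
  apply pow_ne_zero
  intro h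
  have := congrArg Complex.re h
  simp at this

/-- Explicit inverse of `P`. -/
def Pinv (D : ℕ) : Matrix (Vtx D) (Vtx D) ℂ :=
  ((2 - 2*Complex.I)^D)⁻¹ • (Pmat D * Pmat D)

lemma P_mul_Pinv : Pmat D * Pinv D = 1 := by
  rw [Pinv, Matrix.mul_smul, ← Matrix.mul_assoc, P_cube, smul_smul,
    inv_mul_cancel₀ c_pow_ne, one_smul]

lemma Pinv_mul_P : Pinv D * Pmat D = 1 := by
  rw [Pinv, Matrix.smul_mul, P_cube, smul_smul, inv_mul_cancel₀ c_pow_ne, one_smul]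

lemma Pmat_inv_eq : (Pmat D)⁻¹ = Pinv D := Matrix.inv_eq_right_inv P_mul_Pinv

end HC
namespace HC

open Polynomial

variable {D : ℕ}

/-- The Lagrange interpolation polynomial. -/
def pPoly (D i : ℕ) : Polynomial ℂ :=
  ∏ j ∈ (Finset.range (D + 1)).erase i,
    Polynomial.C ((theta D i - theta D j)⁻¹) * (Polynomial.X - Polynomial.C (theta D j))

lemma Emat_eq (i : ℕ) : Emat D i = Polynomial.aeval (adjMat D) (pPoly D i) := rfl

lemma theta_sub_ne {i j : ℕ} (h : i ≠ j) : theta D i - theta D j ≠ 0 := by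
  rw [theta, theta]
  intro hc
  apply h
  have h2 : (i:ℂ) = (j:ℂ) := by linear_combination (-(1:ℂ)/2) * hc
  exact_mod_cast h2

lemma pPoly_eval_self (i : ℕ) : (pPoly D i).eval (theta D i) = 1 := by
  rw [pPoly, Polynomial.eval_prod]
  apply Finset.prod_eq_one
  intro j hj
  have hij : i ≠ j := (Finset.ne_of_mem_erase hj).symm
  rw [Polynomial.eval_mul, Polynomial.eval_C, Polynomial.eval_sub, Polynomial.eval_X,
    Polynomial.eval_C, inv_mul_cancel₀ (theta_sub_ne hij)]

lemma pPoly_eval_ne {i m : ℕ} (him : m ≠ i) (hm : m ∈ Finset.range (D+1)) :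
    (pPoly D i).eval (theta D m) = 0 := by
  rw [pPoly, Polynomial.eval_prod]
  apply Finset.prod_eq_zero (Finset.mem_erase.mpr ⟨him, hm⟩)
  simp only [Polynomial.eval_mul, Polynomial.eval_sub, Polynomial.eval_X, Polynomial.eval_C,
    sub_self, mul_zero]

lemma aeval_diagonal (f : Vtx D → ℂ) (q : Polynomial ℂ) :
    Polynomial.aeval (Matrix.diagonal f) q = Matrix.diagonal (fun y => q.eval (f y)) := by
  induction q using Polynomial.induction_on' with
  | add p q hp hq =>
      rw [map_add, hp, hq, Matrix.diagonal_add]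
      exact congrArg Matrix.diagonal (funext fun y => (Polynomial.eval_add).symm)
  | monomial n a =>
      rw [Polynomial.aeval_monomial, Matrix.diagonal_pow]
      have h1 : (algebraMap ℂ (Matrix (Vtx D) (Vtx D) ℂ)) a
          = Matrix.diagonal (fun _ => a) := by
        ext i j
        rw [Matrix.algebraMap_matrix_apply, Matrix.diagonal_apply]
        simp
      rw [h1, Matrix.diagonal_mul_diagonal]
      refine congrArg Matrix.diagonal (funext fun y => ?_)
      rw [Polynomial.eval_monomial]
      rfl

lemma aeval_intertwine {M N Q : Matrix (Vtx D) (Vtx D) ℂ} (h : M * Q = Q * N)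
    (q : Polynomial ℂ) :
    (Polynomial.aeval M q) * Q = Q * (Polynomial.aeval N q) := by
  induction q using Polynomial.induction_on' with
  | add p q hp hq => rw [map_add, add_mul, hp, hq, ← mul_add, ← map_add]
  | monomial n a =>
      have hpow : ∀ n : ℕ, M^n * Q = Q * N^n := by
        intro n
        induction n with
        | zero => simp
        | succ n ih =>
            rw [pow_succ, pow_succ, Matrix.mul_assoc, h, ← Matrix.mul_assoc, ih,
              Matrix.mul_assoc]
      rw [Polynomial.aeval_monomial, Polynomial.aeval_monomial, Matrix.mul_assoc, hpow,
        ← Matrix.mul_assoc, ← Matrix.mul_assoc, Algebra.commutes a Q]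

/-- The minimal polynomial `∏ (X - θ_j)`. -/
def bigPoly (D : ℕ) : Polynomial ℂ :=
  ∏ j ∈ Finset.range (D+1), (Polynomial.X - Polynomial.C (theta D j))

lemma bigPoly_eval (x : ℂ) : (bigPoly D).eval x = ∏ j ∈ Finset.range (D+1), (x - theta D j) := by
  rw [bigPoly, Polynomial.eval_prod]
  apply Finset.prod_congr rfl
  intro j _
  rw [Polynomial.eval_sub, Polynomial.eval_X, Polynomial.eval_C]

lemma bigPoly_dual : Polynomial.aeval (dualAdjMat D) (bigPoly D) = 0 := by
  rw [dualAdjMat, aeval_diagonal]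
  have : (fun y : Vtx D => (bigPoly D).eval ((D:ℂ) - 2 * (wt y:ℂ))) = fun _ => 0 := by
    funext y
    have : ((D:ℂ) - 2 * (wt y:ℂ)) = theta D (wt y) := rfl
    rw [this, bigPoly_eval]
    exact Finset.prod_eq_zero (Finset.mem_range.mpr (by have := wt_le y; omega)) (sub_self _)
  rw [this, Matrix.diagonal_zero]

lemma bigPoly_adj : Polynomial.aeval (adjMat D) (bigPoly D) = 0 := by
  have h := aeval_intertwine (P_mul_adj (D := D)).symm (bigPoly D)
  rw [bigPoly_dual, zero_mul] at h
  calc Polynomial.aeval (adjMat D) (bigPoly D)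
      = (Pinv D * Pmat D) * Polynomial.aeval (adjMat D) (bigPoly D) := by rw [Pinv_mul_P, one_mul]
    _ = Pinv D * (Pmat D * Polynomial.aeval (adjMat D) (bigPoly D)) := by rw [Matrix.mul_assoc]
    _ = 0 := by rw [← h, mul_zero]

lemma bigPoly_imag : Polynomial.aeval (imagAdjMat D) (bigPoly D) = 0 := by
  have h := aeval_intertwine (P_mul_dual (D := D)).symm (bigPoly D)
  rw [bigPoly_dual, mul_zero] at h
  calc Polynomial.aeval (imagAdjMat D) (bigPoly D)
      = Polynomial.aeval (imagAdjMat D) (bigPoly D) * (Pmat D * Pinv D) := by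
        rw [P_mul_Pinv, mul_one]
    _ = (Polynomial.aeval (imagAdjMat D) (bigPoly D) * Pmat D) * Pinv D := by
        rw [Matrix.mul_assoc]
    _ = 0 := by rw [h, zero_mul]

lemma key_poly (r : ℕ) (hr : r ≤ D) :
    (Polynomial.X - Polynomial.C (theta D r)) * pPoly D r
      = (∏ j ∈ (Finset.range (D+1)).erase r, Polynomial.C ((theta D r - theta D j)⁻¹))
        * bigPoly D := by
  rw [pPoly, Finset.prod_mul_distrib, bigPoly,
    ← Finset.mul_prod_erase _ _ (Finset.mem_range.mpr (by omega) : r ∈ Finset.range (D+1))]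
  ring

lemma aeval_eigen {M : Matrix (Vtx D) (Vtx D) ℂ} (hM : Polynomial.aeval M (bigPoly D) = 0)
    {r : ℕ} (hr : r ≤ D) :
    M * (Polynomial.aeval M (pPoly D r)) = theta D r • (Polynomial.aeval M (pPoly D r)) := by
  have h := congrArg (Polynomial.aeval M) (key_poly r hr)
  rw [_root_.map_mul, _root_.map_mul, hM, mul_zero, map_sub, Polynomial.aeval_X,
    Polynomial.aeval_C, sub_mul] at h
  have h2 := sub_eq_zero.mp h
  rw [h2, Algebra.smul_def]

lemma aeval_mem {W : Submodule ℂ (Vtx D → ℂ)} {M : Matrix (Vtx D) (Vtx D) ℂ}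
    (hM : ∀ w ∈ W, M.mulVec w ∈ W) (q : Polynomial ℂ) :
    ∀ w ∈ W, (Polynomial.aeval M q).mulVec w ∈ W := by
  induction q using Polynomial.induction_on' with
  | add p q hp hq =>
      intro w hw
      rw [map_add, Matrix.add_mulVec]
      exact W.add_mem (hp w hw) (hq w hw)
  | monomial n a =>
      intro w hw
      have hpow : ∀ n : ℕ, (M^n).mulVec w ∈ W := by
        intro n
        induction n with
        | zero => simpa using hw
        | succ n ih =>
            rw [pow_succ', ← Matrix.mulVec_mulVec]
            exact hM _ ih
      rw [Polynomial.aeval_monomial, ← Algebra.smul_def, Matrix.smul_mulVec]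
      exact W.smul_mem a (hpow n)

lemma Estar_eq (i : ℕ) : EstarMat D i = Polynomial.aeval (dualAdjMat D) (pPoly D i) := by
  rw [dualAdjMat, aeval_diagonal, EstarMat]
  refine congrArg Matrix.diagonal (funext fun y => ?_)
  by_cases h : wt y = i
  · rw [if_pos h, ← h]
    exact (pPoly_eval_self (wt y)).symm
  · rw [if_neg h]
    exact (pPoly_eval_ne h (Finset.mem_range.mpr (by have := wt_le y; omega))).symm

lemma Eeps_eq (i : ℕ) : EepsMat D i = Polynomial.aeval (imagAdjMat D) (pPoly D i) := by
  have e1 : Polynomial.aeval (imagAdjMat D) (pPoly D i) * Pmat D * Pmat D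
      = Pmat D * Pmat D * Polynomial.aeval (adjMat D) (pPoly D i) := by
    rw [aeval_intertwine (P_mul_dual (D := D)).symm (pPoly D i), Matrix.mul_assoc,
      aeval_intertwine (P_mul_adj (D := D)).symm (pPoly D i), ← Matrix.mul_assoc]
  rw [EepsMat, Pmat_inv_eq, Pinv, Emat_eq, Matrix.smul_mul, Matrix.smul_mul]
  have e2 : Pmat D * Pmat D * Polynomial.aeval (adjMat D) (pPoly D i) * Pmat D
      = Polynomial.aeval (imagAdjMat D) (pPoly D i) * ((2 - 2*Complex.I)^D • 1) := by
    rw [← e1, Matrix.mul_assoc _ (Pmat D) (Pmat D), Matrix.mul_assoc _ (Pmat D) _,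
      ← Matrix.mul_assoc (Pmat D) (Pmat D) (Pmat D), P_cube]
  rw [e2, Matrix.mul_smul, mul_one, smul_smul, inv_mul_cancel₀ c_pow_ne, one_smul]

end HC
namespace HC

variable {D : ℕ}

lemma inp_smul_left (c : ℂ) (a b : Vtx D → ℂ) : inp (c • a) b = c * inp a b := by
  simp [inp, Finset.mul_sum, mul_assoc]

lemma inp_smul_right (c : ℂ) (a b : Vtx D → ℂ) :
    inp a (c • b) = (starRingEnd ℂ) c * inp a b := by
  simp [inp, Finset.mul_sum]
  apply Finset.sum_congr rfl
  intro y _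
  ring

lemma inp_add_left (a a' b : Vtx D → ℂ) : inp (a + a') b = inp a b + inp a' b := by
  simp [inp, add_mul, Finset.sum_add_distrib]

lemma inp_sum_left {ι : Type*} (s : Finset ι) (f : ι → (Vtx D → ℂ)) (b : Vtx D → ℂ) :
    inp (∑ i ∈ s, f i) b = ∑ i ∈ s, inp (f i) b := by
  classical
  induction s using Finset.induction_on with
  | empty => simp [inp]
  | insert _ _ hx ih =>
      rw [Finset.sum_insert hx, Finset.sum_insert hx, inp_add_left, ih]

lemma inp_add_right (a b b' : Vtx D → ℂ) : inp a (b + b') = inp a b + inp a b' := by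
  simp [inp, mul_add, Finset.sum_add_distrib]

lemma inp_sum_right {ι : Type*} (s : Finset ι) (f : ι → (Vtx D → ℂ)) (b : Vtx D → ℂ) :
    inp b (∑ i ∈ s, f i) = ∑ i ∈ s, inp b (f i) := by
  classical
  induction s using Finset.induction_on with
  | empty => simp [inp]
  | insert _ _ hx ih =>
      rw [Finset.sum_insert hx, Finset.sum_insert hx, inp_add_right, ih]

lemma conj_inp (a b : Vtx D → ℂ) : (starRingEnd ℂ) (inp a b) = inp b a := by
  simp only [inp, map_sum, _root_.map_mul, Complex.conj_conj]
  apply Finset.sum_congr rfl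
  intro y _
  ring

lemma inp_self_real (x : Vtx D → ℂ) :
    inp x x = ((∑ y, Complex.normSq (x y) : ℝ) : ℂ) := by
  rw [inp]
  push_cast
  apply Finset.sum_congr rfl
  intro y _
  rw [Complex.mul_conj]

lemma inp_self_ne_zero {x : Vtx D → ℂ} (hx : x ≠ 0) : inp x x ≠ 0 := by
  rw [inp_self_real]
  obtain ⟨y, hy⟩ := Function.ne_iff.mp hx
  have hpos : 0 < ∑ y, Complex.normSq (x y) := by
    apply Finset.sum_pos' (fun z _ => Complex.normSq_nonneg _)
    exact ⟨y, Finset.mem_univ y, by simpa [Complex.normSq_pos] using hy⟩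
  exact_mod_cast ne_of_gt hpos

lemma inp_mulVec (M : Matrix (Vtx D) (Vtx D) ℂ) (a b : Vtx D → ℂ) :
    inp (M.mulVec a) b = inp a ((Mᴴ).mulVec b) := by
  simp only [inp, Matrix.mulVec, dotProduct, Matrix.conjTranspose_apply, map_sum,
    _root_.map_mul, Complex.conj_conj, Finset.sum_mul, Finset.mul_sum, RCLike.star_def]
  rw [Finset.sum_comm]
  apply Finset.sum_congr rfl
  intro z _
  apply Finset.sum_congr rfl
  intro y _
  ring

/-- `x` is supported on words of weight `j`. -/
def suppWt (j : ℕ) (x : Vtx D → ℂ) : Prop := ∀ y, x y ≠ 0 → wt y = j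

lemma suppWt_dual {j : ℕ} {x : Vtx D → ℂ} (h : suppWt j x) :
    (dualAdjMat D).mulVec x = ((D:ℂ) - 2*(j:ℂ)) • x := by
  funext y
  rw [dualAdjMat, Matrix.mulVec_diagonal, Pi.smul_apply, smul_eq_mul]
  by_cases hx : x y = 0
  · rw [hx, mul_zero, mul_zero]
  · rw [h y hx]

lemma suppWt_Estar {j : ℕ} {x : Vtx D → ℂ} (h : suppWt j x) :
    (EstarMat D j).mulVec x = x := by
  funext y
  rw [EstarMat, Matrix.mulVec_diagonal]
  by_cases hx : x y = 0
  · rw [hx, mul_zero]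
  · rw [if_pos (h y hx), one_mul]

lemma suppWt_Estar_ne {i j : ℕ} {x : Vtx D → ℂ} (h : suppWt j x) (hij : i ≠ j) :
    (EstarMat D i).mulVec x = 0 := by
  funext y
  rw [EstarMat, Matrix.mulVec_diagonal]
  by_cases hx : x y = 0
  · simp [hx]
  · rw [if_neg (by rw [h y hx]; exact fun hc => hij hc.symm)]
    simp

lemma suppWt_ra {j : ℕ} {x : Vtx D → ℂ} (h : suppWt j x) :
    suppWt (j+1) ((raMat D).mulVec x) := by
  intro y hy
  rw [Matrix.mulVec, dotProduct] at hy
  obtain ⟨z, _, hz⟩ := Finset.exists_ne_zero_of_sum_ne_zero hy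
  have h1 : raMat D y z ≠ 0 := fun hc => hz (by rw [hc, zero_mul])
  have h2 : x z ≠ 0 := fun hc => hz (by rw [hc, mul_zero])
  rw [raMat] at h1
  by_cases hc : (dset y z).card = 1 ∧ wt y = wt z + 1
  · rw [hc.2, h z h2]
  · exact absurd (if_neg hc) h1

lemma suppWt_lo {j : ℕ} {x : Vtx D → ℂ} (h : suppWt j x) :
    ∀ y, ((loMat D).mulVec x) y ≠ 0 → wt y + 1 = j := by
  intro y hy
  rw [Matrix.mulVec, dotProduct] at hy
  obtain ⟨z, _, hz⟩ := Finset.exists_ne_zero_of_sum_ne_zero hy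
  have h1 : loMat D y z ≠ 0 := fun hc => hz (by rw [hc, zero_mul])
  have h2 : x z ≠ 0 := fun hc => hz (by rw [hc, mul_zero])
  rw [loMat] at h1
  by_cases hc : (dset y z).card = 1 ∧ wt z = wt y + 1
  · rw [← hc.2, h z h2]
  · exact absurd (if_neg hc) h1

lemma suppWt_big {j : ℕ} {x : Vtx D → ℂ} (hj : D < j) (h : suppWt j x) : x = 0 := by
  funext y
  by_contra hy
  have := h y hy
  have := wt_le y
  omega

lemma inp_suppWt_ne {i j : ℕ} {x x' : Vtx D → ℂ} (hx : suppWt i x) (hx' : suppWt j x')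
    (hij : i ≠ j) : inp x x' = 0 := by
  rw [inp]
  apply Finset.sum_eq_zero
  intro y _
  by_cases h1 : x y = 0
  · rw [h1, zero_mul]
  · have h2 : x' y = 0 := by
      by_contra h2
      exact hij ((hx y h1) ▸ (hx' y h2) ▸ rfl)
    rw [h2, map_zero, mul_zero]

end HC
namespace HC

variable {D : ℕ}

lemma desc_rec (d k : ℕ) : ((d.descFactorial (k+2)) : ℂ)
    = (d:ℂ) * (d.descFactorial (k+1) : ℂ)
      - ((k:ℂ)+1)*((d:ℂ) - (k:ℂ)) * (d.descFactorial k : ℂ) := by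
  rcases lt_or_ge k d with h | h
  · rw [show k+2 = (k+1)+1 from rfl, Nat.descFactorial_succ, Nat.descFactorial_succ,
      Nat.cast_mul, Nat.cast_mul, Nat.cast_sub (by omega : k+1 ≤ d),
      Nat.cast_sub (by omega : k ≤ d)]
    push_cast
    ring
  · have h1 : d.descFactorial (k+1) = 0 := Nat.descFactorial_eq_zero_iff_lt.mpr (by omega)
    have h2 : d.descFactorial (k+2) = 0 := Nat.descFactorial_eq_zero_iff_lt.mpr (by omega)
    rw [h1, h2]
    rcases eq_or_lt_of_le h with he | hlt
    · rw [← he]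
      push_cast
      ring
    · have h3 : d.descFactorial k = 0 := Nat.descFactorial_eq_zero_iff_lt.mpr hlt
      rw [h3]
      push_cast
      ring

lemma sum_choose_mul (d : ℕ) (x : ℂ) :
    ∑ i ∈ Finset.range (d+1), (d.choose i : ℂ) * x^i = (x + 1)^d := by
  rw [add_pow]
  apply Finset.sum_congr rfl
  intro i hi
  rw [one_pow]
  ring

lemma ra_conjTranspose : (raMat D)ᴴ = loMat D := by
  rw [← lo_conjTranspose, Matrix.conjTranspose_conjTranspose]

lemma adj_conjTranspose : (adjMat D)ᴴ = adjMat D := by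
  rw [← lo_add_ra, Matrix.conjTranspose_add, lo_conjTranspose, ra_conjTranspose, add_comm]

lemma imag_conjTranspose : (imagAdjMat D)ᴴ = imagAdjMat D := by
  rw [imagAdj_eq, Matrix.conjTranspose_smul, Matrix.conjTranspose_sub, lo_conjTranspose,
    ra_conjTranspose]
  rw [show star (-Complex.I) = Complex.I by simp]
  rw [smul_sub, smul_sub, neg_smul, neg_smul]
  abel

lemma descFactorial_ne_zero_cast {d k : ℕ} (h : k ≤ d) : ((d.descFactorial k : ℕ) : ℂ) ≠ 0 := by
  rw [Nat.cast_ne_zero]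
  intro hc
  rw [Nat.descFactorial_eq_zero_iff_lt] at hc
  omega

end HC

open HC

/-- For nonzero `u ∈ E_r W`, `u* ∈ E*_r W`, `uᵉ ∈ Eᵉ_r W`:
`⟨uᵉ, u*⟩ ≠ 0` and `‖u‖² = (1+i)^d·⟨u, u*⟩·⟨uᵉ, u⟩·⟨uᵉ, u*⟩⁻¹`. -/
theorem norm_u_formula (D : ℕ) (hD : 0 < D)
    (W : Submodule ℂ (Vtx D → ℂ)) (hW : IsIrredTMod D W) (r : ℕ)
    (hr : IsLeast {i | Submodule.map (EstarMat D i).mulVecLin W ≠ ⊥} r)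
    (d : ℕ) (hd : d = D - 2 * r)
    (u : Vtx D → ℂ) (hu : u ∈ Submodule.map (Emat D r).mulVecLin W) (hu0 : u ≠ 0)
    (ustar : Vtx D → ℂ) (hustar : ustar ∈ Submodule.map (EstarMat D r).mulVecLin W)
    (hustar0 : ustar ≠ 0)
    (ueps : Vtx D → ℂ) (hueps : ueps ∈ Submodule.map (EepsMat D r).mulVecLin W)
    (hueps0 : ueps ≠ 0) :
    inp ueps ustar ≠ 0 ∧
    inp u u = (1 + Complex.I) ^ d * inp u ustar * inp ueps u * (inp ueps ustar)⁻¹ := by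
  classical
  obtain ⟨⟨hWA, hWD⟩, hWne, hWirr⟩ := hW
  -- closure of W under the various operators
  have hWlo : ∀ w ∈ W, (loMat D).mulVec w ∈ W := by
    intro w hw
    rw [lo_eq_comb, Matrix.sub_mulVec, Matrix.smul_mulVec, Matrix.smul_mulVec,
      Matrix.sub_mulVec, ← Matrix.mulVec_mulVec, ← Matrix.mulVec_mulVec]
    exact W.sub_mem (W.smul_mem _ (hWA w hw))
      (W.smul_mem _ (W.sub_mem (hWA _ (hWD w hw)) (hWD _ (hWA w hw))))
  have hWra : ∀ w ∈ W, (raMat D).mulVec w ∈ W := by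
    intro w hw
    rw [ra_eq_comb, Matrix.add_mulVec, Matrix.smul_mulVec, Matrix.smul_mulVec,
      Matrix.sub_mulVec, ← Matrix.mulVec_mulVec, ← Matrix.mulVec_mulVec]
    exact W.add_mem (W.smul_mem _ (hWA w hw))
      (W.smul_mem _ (W.sub_mem (hWA _ (hWD w hw)) (hWD _ (hWA w hw))))
  have hWimag : ∀ w ∈ W, (imagAdjMat D).mulVec w ∈ W := by
    intro w hw
    rw [imagAdj_eq, Matrix.smul_mulVec, Matrix.sub_mulVec]
    exact W.smul_mem _ (W.sub_mem (hWra w hw) (hWlo w hw))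
  -- the generating weight-r vector v
  obtain ⟨v, hvmem, hv0⟩ := Submodule.ne_bot_iff _ |>.mp hr.1
  obtain ⟨w0, hw0W, hw0v⟩ := hvmem
  rw [Matrix.mulVecLin_apply] at hw0v
  have hsuppv : suppWt r v := by
    intro y hy
    rw [← hw0v, EstarMat, Matrix.mulVec_diagonal] at hy
    by_contra hne
    rw [if_neg hne, zero_mul] at hy
    exact hy rfl
  have hvW : v ∈ W := by
    rw [← hw0v, Estar_eq]
    exact aeval_mem hWD _ _ hw0W
  have hrD : r ≤ D := by
    obtain ⟨y, hy⟩ := Function.ne_iff.mp hv0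
    have h1 := hsuppv y (by simpa using hy)
    have := wt_le y
    omega
  -- v is annihilated by the lowering operator
  have hlov : (loMat D).mulVec v = 0 := by
    rcases Nat.eq_zero_or_pos r with hr0 | hrpos
    · funext y
      by_contra hy
      have := suppWt_lo hsuppv y hy
      omega
    · by_contra hne
      have hmem : (loMat D).mulVec v ∈ W := hWlo v hvW
      have hsupp : suppWt (r-1) ((loMat D).mulVec v) := by
        intro y hy
        have := suppWt_lo hsuppv y hy
        omega
      have hmap : Submodule.map (EstarMat D (r-1)).mulVecLin W ≠ ⊥ := by
        rw [Submodule.ne_bot_iff]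
        refine ⟨(loMat D).mulVec v, ⟨(loMat D).mulVec v, hmem, ?_⟩, hne⟩
        rw [Matrix.mulVecLin_apply]
        exact suppWt_Estar hsupp
      have := hr.2 hmap
      omega
  -- the ladder
  set vk : ℕ → (Vtx D → ℂ) := fun k => ((raMat D)^k).mulVec v with hvkdef
  have hvk0 : vk 0 = v := by rw [hvkdef]; simp
  have hvkS : ∀ k, vk (k+1) = (raMat D).mulVec (vk k) := by
    intro k
    rw [hvkdef]
    simp only
    rw [pow_succ', ← Matrix.mulVec_mulVec]
  have hvkW : ∀ k, vk k ∈ W := by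
    intro k
    induction k with
    | zero => rw [hvk0]; exact hvW
    | succ k ih => rw [hvkS]; exact hWra _ ih
  have hvksupp : ∀ k, suppWt (r+k) (vk k) := by
    intro k
    induction k with
    | zero => rw [hvk0]; exact hsuppv
    | succ k ih =>
        have := suppWt_ra ih
        rw [← hvkS] at this
        have he : r + k + 1 = r + (k+1) := by omega
        rw [he] at this
        exact this
  set mu : ℕ → ℂ := fun k => (k:ℂ) * ((D:ℂ) - 2*(r:ℂ) - (k:ℂ) + 1) with hmudef
  have hmu0 : mu 0 = 0 := by rw [hmudef]; simp
  have hcommv : ∀ x : Vtx D → ℂ, (loMat D).mulVec ((raMat D).mulVec x)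
      = (raMat D).mulVec ((loMat D).mulVec x) + (dualAdjMat D).mulVec x := by
    intro x
    have h := lo_ra_comm (D := D)
    rw [sub_eq_iff_eq_add] at h
    rw [Matrix.mulVec_mulVec, Matrix.mulVec_mulVec, h, Matrix.add_mulVec]
    exact add_comm _ _
  have hlovk : ∀ k, (loMat D).mulVec (vk (k+1)) = mu (k+1) • vk k := by
    intro k
    induction k with
    | zero =>
        rw [hvkS 0, hcommv, hvk0, hlov, Matrix.mulVec_zero, zero_add, suppWt_dual hsuppv]
        congr 1
        rw [hmudef]
        push_cast
        ring
    | succ k ih =>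
        rw [hvkS (k+1), hcommv, ih, Matrix.mulVec_smul, ← hvkS k,
          suppWt_dual (hvksupp (k+1)), ← add_smul]
        congr 1
        rw [hmudef]
        push_cast
        ring
  -- the top of the ladder
  have hex : ∃ k, vk k = 0 := ⟨D + 1, suppWt_big (by omega) (hvksupp (D+1))⟩
  set k0 := Nat.find hex with hk0def
  have hk00 : vk k0 = 0 := Nat.find_spec hex
  have hk0pos : 0 < k0 := by
    rcases Nat.eq_zero_or_pos k0 with h | h
    · exfalso; apply hv0; rw [← hvk0, ← h]; exact hk00
    · exact h
  set m := k0 - 1 with hmdef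
  have hm1 : vk m ≠ 0 := Nat.find_min hex (by omega : m < k0)
  have hm2 : vk (m+1) = 0 := by rw [show m + 1 = k0 by omega]; exact hk00
  have hprop : ∀ k, vk k = 0 → vk (k+1) = 0 := by
    intro k h
    rw [hvkS, h, Matrix.mulVec_zero]
  have hnonzero : ∀ k ≤ m, vk k ≠ 0 := by
    intro k hk
    by_contra h
    have hall : ∀ j, vk (k + j) = 0 := by
      intro j
      induction j with
      | zero => simpa using h
      | succ j ih => rw [show k + (j+1) = (k+j)+1 by omega]; exact hprop _ ih
    have := hall (m - k)
    rw [show k + (m-k) = m by omega] at this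
    exact hm1 this
  have hmd : (m:ℂ) = (D:ℂ) - 2*(r:ℂ) := by
    have h0 := hlovk m
    rw [hm2, Matrix.mulVec_zero] at h0
    have h1 := (smul_eq_zero.mp h0.symm).resolve_right hm1
    rw [hmudef] at h1
    simp only at h1
    rcases mul_eq_zero.mp h1 with h | h
    · exfalso
      have h2 : ((m+1 : ℕ) : ℂ) ≠ 0 := by exact_mod_cast Nat.succ_ne_zero m
      exact h2 h
    · push_cast at h
      linear_combination -h
  have hDm : D = m + 2*r := by
    have h1 : (D:ℂ) = ((m + 2*r : ℕ) : ℂ) := by push_cast; linear_combination -hmd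
    exact_mod_cast h1
  have hdm : d = m := by omega
  have hDd : (D:ℂ) - 2*(r:ℂ) = (d:ℂ) := by rw [hdm]; linear_combination -hmd
  -- the span is all of W
  set U : Submodule ℂ (Vtx D → ℂ)
    := Submodule.span ℂ (Set.range (fun k : Fin (d+1) => vk k)) with hUdef
  have hUW : U ≤ W := Submodule.span_le.mpr (by rintro _ ⟨k, rfl⟩; exact hvkW k)
  have hgen : ∀ k : ℕ, k ≤ d → vk k ∈ U := by
    intro k hk
    exact Submodule.subset_span ⟨⟨k, by omega⟩, rfl⟩
  have hvk_gt : ∀ k, d < k → vk k = 0 := by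
    intro k hk
    have hall : ∀ j, vk (m + 1 + j) = 0 := by
      intro j
      induction j with
      | zero => simpa using hm2
      | succ j ih => rw [show m + 1 + (j+1) = (m+1+j)+1 by omega]; exact hprop _ ih
    have := hall (k - (m+1))
    rw [show m + 1 + (k - (m+1)) = k by omega] at this
    exact this
  have hUvk : ∀ k : ℕ, vk k ∈ U := by
    intro k
    by_cases hk : k ≤ d
    · exact hgen k hk
    · rw [hvk_gt k (by omega)]; exact U.zero_mem
  have hlovk' : ∀ k : ℕ, (loMat D).mulVec (vk k) ∈ U := by
    intro k
    cases k with
    | zero => rw [hvk0, hlov]; exact U.zero_mem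
    | succ k => rw [hlovk k]; exact U.smul_mem _ (hUvk k)
  have hUA : ∀ x ∈ U, (adjMat D).mulVec x ∈ U := by
    intro x hx
    induction hx using Submodule.span_induction with
    | mem x h =>
        obtain ⟨k, rfl⟩ := h
        rw [← lo_add_ra, Matrix.add_mulVec]
        exact U.add_mem (hlovk' k) (by rw [← hvkS]; exact hUvk _)
    | zero => rw [Matrix.mulVec_zero]; exact U.zero_mem
    | add x y hx hy ihx ihy => rw [Matrix.mulVec_add]; exact U.add_mem ihx ihy
    | smul a x hx ihx => rw [Matrix.mulVec_smul]; exact U.smul_mem a ihx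
  have hUD : ∀ x ∈ U, (dualAdjMat D).mulVec x ∈ U := by
    intro x hx
    induction hx using Submodule.span_induction with
    | mem x h =>
        obtain ⟨k, rfl⟩ := h
        rw [suppWt_dual (hvksupp k)]
        exact U.smul_mem _ (hUvk k)
    | zero => rw [Matrix.mulVec_zero]; exact U.zero_mem
    | add x y hx hy ihx ihy => rw [Matrix.mulVec_add]; exact U.add_mem ihx ihy
    | smul a x hx ihx => rw [Matrix.mulVec_smul]; exact U.smul_mem a ihx
  have hUne : U ≠ ⊥ := by
    intro h
    apply hv0
    have h0 := hgen 0 (by omega)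
    rw [h, Submodule.mem_bot] at h0
    rw [← hvk0]
    exact h0
  have hUeq : U = W := (hWirr U ⟨hUA, hUD⟩ hUW).resolve_left hUne
  -- Gram matrix facts
  set n : ℕ → ℂ := fun k => inp (vk k) (vk k) with hndef
  have horth : ∀ j k : ℕ, j ≠ k → inp (vk j) (vk k) = 0 := fun j k h =>
    inp_suppWt_ne (hvksupp j) (hvksupp k) (by omega)
  have hadj_ra : ∀ a b : Vtx D → ℂ,
      inp ((raMat D).mulVec a) b = inp a ((loMat D).mulVec b) := by
    intro a b
    rw [inp_mulVec, ra_conjTranspose]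
  have hmu_real : ∀ k, (starRingEnd ℂ) (mu k) = mu k := by
    intro k
    rw [hmudef]
    simp only
    rw [_root_.map_mul, map_add, map_sub, map_sub, _root_.map_mul, map_natCast, map_natCast,
      map_natCast, _root_.map_one, map_ofNat]
  have hn_rec : ∀ k, n (k+1) = mu (k+1) * n k := by
    intro k
    calc n (k+1) = inp ((raMat D).mulVec (vk k)) (vk (k+1)) := by rw [← hvkS k]
    _ = inp (vk k) ((loMat D).mulVec (vk (k+1))) := hadj_ra _ _
    _ = mu (k+1) * n k := by rw [hlovk k, inp_smul_right, hmu_real]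
  set Nn : ℕ → ℕ := fun k => k.factorial * Nat.descFactorial d k with hNdef
  have hn0 : n 0 ≠ 0 := by
    have : n 0 = inp v v := by rw [hndef]; simp only; rw [hvk0]
    rw [this]
    exact inp_self_ne_zero hv0
  have hmu_succ : ∀ k : ℕ, mu (k+1) = ((k:ℂ)+1) * ((d:ℂ) - (k:ℂ)) := by
    intro k
    rw [hmudef]
    simp only
    push_cast
    linear_combination ((k:ℂ)+1) * hDd
  have hn_eq : ∀ k, k ≤ d → n k = (Nn k : ℂ) * n 0 := by
    intro k hk
    induction k with
    | zero => rw [hNdef]; simp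
    | succ k ih =>
        rw [hn_rec k, ih (by omega), hmu_succ k, hNdef]
        simp only
        rw [Nat.descFactorial_succ, Nat.factorial_succ]
        push_cast [Nat.cast_sub (show k ≤ d by omega)]
        ring
  have hn_ne : ∀ k, k ≤ d → n k ≠ 0 := by
    intro k hk
    rw [hn_eq k hk]
    apply mul_ne_zero _ hn0
    rw [hNdef]
    simp only
    push_cast
    apply mul_ne_zero
    · exact_mod_cast Nat.cast_ne_zero.mpr (Nat.factorial_ne_zero k)
    · exact descFactorial_ne_zero_cast hk
  have hn_real : ∀ k, (starRingEnd ℂ) (n k) = n k := fun k => conj_inp _ _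
  -- eigenvector facts for u and ueps
  have htheta : theta D r = (d:ℂ) := hDd
  obtain ⟨wu, hwuW, hwu⟩ := hu
  rw [Matrix.mulVecLin_apply] at hwu
  have huW : u ∈ W := by
    rw [← hwu, Emat_eq]
    exact aeval_mem hWA _ _ hwuW
  have hAu : (adjMat D).mulVec u = (d:ℂ) • u := by
    rw [← hwu, Matrix.mulVec_mulVec]
    have h1 := aeval_eigen (D := D) bigPoly_adj hrD
    rw [← Emat_eq] at h1
    rw [h1, Matrix.smul_mulVec, hwu, htheta]
  obtain ⟨we, hweW, hwe⟩ := hueps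
  rw [Matrix.mulVecLin_apply] at hwe
  have hueW : ueps ∈ W := by
    rw [← hwe, Eeps_eq]
    exact aeval_mem hWimag _ _ hweW
  have hAe : (imagAdjMat D).mulVec ueps = (d:ℂ) • ueps := by
    rw [← hwe, Matrix.mulVec_mulVec]
    have h1 := aeval_eigen (D := D) bigPoly_imag hrD
    rw [← Eeps_eq] at h1
    rw [h1, Matrix.smul_mulVec, hwe, htheta]
  obtain ⟨ws, hwsW, hws⟩ := hustar
  rw [Matrix.mulVecLin_apply] at hws
  have husW : ustar ∈ W := by
    rw [← hws, Estar_eq]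
    exact aeval_mem hWD _ _ hwsW
  have hsupp_us : suppWt r ustar := by
    intro y hy
    rw [← hws, EstarMat, Matrix.mulVec_diagonal] at hy
    by_contra hne
    rw [if_neg hne, zero_mul] at hy
    exact hy rfl
  -- action of A and Aeps on the ladder
  have hAvk : ∀ k, (adjMat D).mulVec (vk k) = vk (k+1) + mu k • vk (k-1) := by
    intro k
    rw [← lo_add_ra, Matrix.add_mulVec, ← hvkS k]
    cases k with
    | zero =>
        rw [hvk0, hlov, hmu0, zero_smul, add_zero, zero_add]
    | succ j =>
        rw [hlovk j, Nat.add_sub_cancel]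
        exact add_comm _ _
  have hAevk : ∀ k, (imagAdjMat D).mulVec (vk k)
      = (-Complex.I) • vk (k+1) + (Complex.I * mu k) • vk (k-1) := by
    intro k
    rw [imagAdj_eq, Matrix.smul_mulVec, Matrix.sub_mulVec, ← hvkS k]
    cases k with
    | zero =>
        rw [hvk0, hlov, hmu0, mul_zero, zero_smul, add_zero, sub_zero]
    | succ j =>
        rw [hlovk j, Nat.add_sub_cancel, smul_sub, smul_smul, sub_eq_add_neg, ← neg_smul]
        congr 2
        ring
  set desc : ℕ → ℂ := fun k => (Nat.descFactorial d k : ℂ) with hdescdef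
  have hdesc_rec : ∀ k, desc (k+2) = (d:ℂ) * desc (k+1) - mu (k+1) * desc k := by
    intro k
    rw [hdescdef]
    simp only
    rw [hmu_succ k]
    exact desc_rec d k
  set q0 : ℂ := inp u (vk 0) with hq0def
  set p0 : ℂ := inp ueps (vk 0) with hp0def
  -- the recurrence for inner products against u
  have hq_rec : ∀ k, inp u (vk (k+1)) = (d:ℂ) * inp u (vk k) - mu k * inp u (vk (k-1)) := by
    intro k
    have h1 : inp ((adjMat D).mulVec u) (vk k) = (d:ℂ) * inp u (vk k) := by
      rw [hAu, inp_smul_left]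
    have h2 : inp ((adjMat D).mulVec u) (vk k)
        = inp u (vk (k+1)) + mu k * inp u (vk (k-1)) := by
      rw [inp_mulVec, adj_conjTranspose, hAvk k, inp_add_right, inp_smul_right, hmu_real]
    linear_combination h1 - h2
  have hqj : ∀ k : ℕ, inp u (vk k) = desc k * q0 := by
    have key : ∀ k, inp u (vk k) = desc k * q0 ∧ inp u (vk (k+1)) = desc (k+1) * q0 := by
      intro k
      induction k with
      | zero =>
          constructor
          · rw [hdescdef]; simp [hq0def]
          · have h := hq_rec 0
            rw [hmu0, zero_mul, sub_zero] at h
            rw [h, hdescdef]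
            simp only
            rw [show (0:ℕ)+1 = 1 from rfl, Nat.descFactorial_one, ← hq0def]
      | succ k ih =>
          refine ⟨ih.2, ?_⟩
          have h := hq_rec (k+1)
          rw [Nat.add_sub_cancel] at h
          rw [h, ih.1, ih.2, hdesc_rec k]
          ring
    exact fun k => (key k).1
  -- the recurrence for inner products against ueps
  have hp_rec : ∀ k, inp ueps (vk (k+1))
      = mu k * inp ueps (vk (k-1)) - Complex.I * (d:ℂ) * inp ueps (vk k) := by
    intro k
    have h1 : inp ((imagAdjMat D).mulVec ueps) (vk k) = (d:ℂ) * inp ueps (vk k) := by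
      rw [hAe, inp_smul_left]
    have h2 : inp ((imagAdjMat D).mulVec ueps) (vk k)
        = Complex.I * inp ueps (vk (k+1)) - Complex.I * mu k * inp ueps (vk (k-1)) := by
      rw [inp_mulVec, imag_conjTranspose, hAevk k, inp_add_right, inp_smul_right,
        inp_smul_right, map_neg, Complex.conj_I, _root_.map_mul, Complex.conj_I, hmu_real]
      ring
    have h3 : Complex.I * inp ueps (vk (k+1)) - Complex.I * mu k * inp ueps (vk (k-1))
        = (d:ℂ) * inp ueps (vk k) := by rw [← h2, h1]
    apply mul_left_cancel₀ Complex.I_ne_zero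
    linear_combination h3 + ((d:ℂ) * inp ueps (vk k)) * Complex.I_sq
  have hpj : ∀ k : ℕ, inp ueps (vk k) = (-Complex.I)^k * desc k * p0 := by
    have key : ∀ k, inp ueps (vk k) = (-Complex.I)^k * desc k * p0
        ∧ inp ueps (vk (k+1)) = (-Complex.I)^(k+1) * desc (k+1) * p0 := by
      intro k
      induction k with
      | zero =>
          constructor
          · rw [hdescdef]; simp [hp0def]
          · have h := hp_rec 0
            rw [hmu0, zero_mul, zero_sub] at h
            rw [h, hdescdef]
            simp only
            rw [show (0:ℕ)+1 = 1 from rfl, Nat.descFactorial_one, ← hp0def]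
            ring
      | succ k ih =>
          refine ⟨ih.2, ?_⟩
          have h := hp_rec (k+1)
          rw [Nat.add_sub_cancel] at h
          rw [h, ih.1, ih.2, hdesc_rec k]
          linear_combination ((-Complex.I)^k * mu (k+1) * desc k * p0) * Complex.I_sq
    exact fun k => (key k).1
  -- coordinates with respect to the ladder basis
  have hcoords : ∀ x ∈ W, ∃ c : Fin (d+1) → ℂ, x = ∑ i, c i • vk (i:ℕ) := by
    intro x hx
    rw [← hUeq, hUdef] at hx
    obtain ⟨c, hc⟩ := (Submodule.mem_span_range_iff_exists_fun ℂ).mp hx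
    exact ⟨c, hc.symm⟩
  have hcoef : ∀ (c : Fin (d+1) → ℂ) (j : Fin (d+1)),
      inp (∑ i, c i • vk (i:ℕ)) (vk (j:ℕ)) = c j * n (j:ℕ) := by
    intro c j
    rw [inp_sum_left, Finset.sum_eq_single j]
    · rw [inp_smul_left]
    · intro i _ hij
      rw [inp_smul_left, horth (i:ℕ) (j:ℕ) (fun hc => hij (Fin.ext hc)), mul_zero]
    · intro h
      exact absurd (Finset.mem_univ j) h
  obtain ⟨a, hau⟩ := hcoords u huW
  obtain ⟨e, hae⟩ := hcoords ueps hueW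
  obtain ⟨s, has⟩ := hcoords ustar husW
  have haj : ∀ j : Fin (d+1), a j * n (j:ℕ) = desc (j:ℕ) * q0 := by
    intro j
    rw [← hcoef a j, ← hau, hqj]
  have hej : ∀ j : Fin (d+1), e j * n (j:ℕ) = (-Complex.I)^(j:ℕ) * desc (j:ℕ) * p0 := by
    intro j
    rw [← hcoef e j, ← hae, hpj]
  -- ustar is a multiple of v
  set z0 : Fin (d+1) := ⟨0, by omega⟩ with hz0def
  have hustar_eq : ustar = s z0 • v := by
    rw [has, Finset.sum_eq_single z0]
    · rw [show ((z0 : ℕ) = 0) from rfl, hvk0]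
    · intro i _ hiz
      have hi0 : (i:ℕ) ≠ 0 := fun hc => hiz (Fin.ext (by rw [hc]))
      have h1 : inp ustar (vk (i:ℕ)) = 0 :=
        inp_suppWt_ne hsupp_us (hvksupp (i:ℕ)) (by omega)
      rw [has, hcoef] at h1
      rw [(mul_eq_zero.mp h1).resolve_right (hn_ne (i:ℕ) (by omega)), zero_smul]
    · intro h
      exact absurd (Finset.mem_univ z0) h
  have hs0 : s z0 ≠ 0 := fun h => hustar0 (by rw [hustar_eq, h, zero_smul])
  have hq0 : q0 ≠ 0 := by
    intro h
    apply hu0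
    rw [hau]
    apply Finset.sum_eq_zero
    intro j _
    have h1 := haj j
    rw [h, mul_zero] at h1
    rw [(mul_eq_zero.mp h1).resolve_right (hn_ne (j:ℕ) (by omega)), zero_smul]
  have hp0 : p0 ≠ 0 := by
    intro h
    apply hueps0
    rw [hae]
    apply Finset.sum_eq_zero
    intro j _
    have h1 := hej j
    rw [h, mul_zero] at h1
    rw [(mul_eq_zero.mp h1).resolve_right (hn_ne (j:ℕ) (by omega)), zero_smul]
  have hconj_s0 : (starRingEnd ℂ) (s z0) ≠ 0 := by
    simpa using hs0
  have hconj_q0 : (starRingEnd ℂ) q0 ≠ 0 := by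
    simpa using hq0
  -- the four inner products
  have E3 : inp u ustar = (starRingEnd ℂ) (s z0) * q0 := by
    rw [hustar_eq, inp_smul_right, ← hvk0, ← hq0def]
  have E4 : inp ueps ustar = (starRingEnd ℂ) (s z0) * p0 := by
    rw [hustar_eq, inp_smul_right, ← hvk0, ← hp0def]
  have ha_val : ∀ j : Fin (d+1), a j = desc (j:ℕ) * q0 / n (j:ℕ) := by
    intro j
    rw [eq_div_iff (hn_ne (j:ℕ) (by omega))]
    exact haj j
  have hdesc_real : ∀ k, (starRingEnd ℂ) (desc k) = desc k := by
    intro k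
    rw [hdescdef]
    simp only
    rw [map_natCast]
  have hconj_a : ∀ j : Fin (d+1),
      (starRingEnd ℂ) (a j) = desc (j:ℕ) * (starRingEnd ℂ) q0 / n (j:ℕ) := by
    intro j
    rw [ha_val j, map_div₀, _root_.map_mul, hn_real, hdesc_real]
  have hchoose : ∀ j : Fin (d+1),
      desc (j:ℕ) * desc (j:ℕ) / n (j:ℕ) = (d.choose (j:ℕ) : ℂ) / n 0 := by
    intro j
    rw [hn_eq (j:ℕ) (by omega), hNdef, hdescdef]
    simp only
    have hfac : ((Nat.descFactorial d (j:ℕ)) : ℂ)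
        = (Nat.factorial (j:ℕ) : ℂ) * (d.choose (j:ℕ) : ℂ) := by
      exact_mod_cast congrArg (fun t : ℕ => (t : ℂ))
        (Nat.descFactorial_eq_factorial_mul_choose d (j:ℕ))
    push_cast
    rw [hfac]
    have hfne : ((Nat.factorial (j:ℕ)) : ℂ) ≠ 0 := by
      exact_mod_cast Nat.cast_ne_zero.mpr (Nat.factorial_ne_zero (j:ℕ))
    have hcne : ((d.choose (j:ℕ)) : ℂ) ≠ 0 := by
      have := Nat.choose_pos (show (j:ℕ) ≤ d by omega)
      exact_mod_cast Nat.cast_ne_zero.mpr (by omega)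
    field_simp
  have hS1 : ∑ j : Fin (d+1), (d.choose (j:ℕ) : ℂ) = 2^d := by
    rw [Fin.sum_univ_eq_sum_range (fun j => (d.choose j : ℂ))]
    have h1 := Nat.sum_range_choose d
    exact_mod_cast h1
  have hS2 : ∑ j : Fin (d+1), (d.choose (j:ℕ) : ℂ) * (-Complex.I)^(j:ℕ)
      = (1 - Complex.I)^d := by
    rw [Fin.sum_univ_eq_sum_range (fun j => (d.choose j : ℂ) * (-Complex.I)^j),
      sum_choose_mul d (-Complex.I)]
    congr 1
    ring
  have E1 : inp u u = 2^d * ((starRingEnd ℂ) q0 * q0) / n 0 := by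
    nth_rewrite 2 [hau]
    rw [inp_sum_right]
    have hterm : ∀ j : Fin (d+1), inp u (a j • vk (j:ℕ))
        = (d.choose (j:ℕ) : ℂ) * ((starRingEnd ℂ) q0 * q0) / n 0 := by
      intro j
      rw [inp_smul_right, hconj_a j, hqj]
      have h1 : desc (j:ℕ) * (starRingEnd ℂ) q0 / n (j:ℕ) * (desc (j:ℕ) * q0)
          = desc (j:ℕ) * desc (j:ℕ) / n (j:ℕ) * ((starRingEnd ℂ) q0 * q0) := by ring
      rw [h1, hchoose j]
      ring
    rw [Finset.sum_congr rfl (fun j _ => hterm j), ← Finset.sum_div, ← Finset.sum_mul, hS1]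
  have E2 : inp ueps u = (1 - Complex.I)^d * ((starRingEnd ℂ) q0 * p0) / n 0 := by
    rw [hau, inp_sum_right]
    have hterm : ∀ j : Fin (d+1), inp ueps (a j • vk (j:ℕ))
        = (d.choose (j:ℕ) : ℂ) * (-Complex.I)^(j:ℕ) * ((starRingEnd ℂ) q0 * p0) / n 0 := by
      intro j
      rw [inp_smul_right, hconj_a j, hpj]
      have h1 : desc (j:ℕ) * (starRingEnd ℂ) q0 / n (j:ℕ)
            * ((-Complex.I)^(j:ℕ) * desc (j:ℕ) * p0)
          = desc (j:ℕ) * desc (j:ℕ) / n (j:ℕ)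
            * ((-Complex.I)^(j:ℕ) * ((starRingEnd ℂ) q0 * p0)) := by ring
      rw [h1, hchoose j]
      ring
    rw [Finset.sum_congr rfl (fun j _ => hterm j), ← Finset.sum_div, ← Finset.sum_mul, hS2]
  -- final assembly
  have hne4 : inp ueps ustar ≠ 0 := by
    rw [E4]
    exact mul_ne_zero hconj_s0 hp0
  refine ⟨hne4, ?_⟩
  rw [E1, E2, E3, E4]
  have hpow : ((1 + Complex.I))^d * ((1 - Complex.I))^d = 2^d := by
    rw [← mul_pow]
    congr 1
    have : Complex.I^2 = -1 := Complex.I_sq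
    linear_combination -this
  field_simp
  linear_combination (-1 : ℂ) * hpow
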